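/- For every complex number k with Re k > 0 and Im k > 0 and all real t ≥ 0, |e^{-√(-k)·t} − e^{-√k·t}| ≤ √2 · √|k| · t, where square roots are principal. -/

import Mathlib

open Complex

lemma aux_exp_sub_exp (z w : ℂ) (hz : z.re ≤ 0) (hw : w.re ≤ 0) :
    ‖Complex.exp z - Complex.exp w‖ ≤ ‖z - w‖ := by
  have key := norm_image_sub_le_of_norm_deriv_le_segment_01'
    (f := fun s : ℝ => Complex.exp (w + (s : ℂ) * (z - w)))
    (f' := fun s : ℝ => Complex.exp (w + (s : ℂ) * (z - w)) * (z - w))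
    (C := ‖z - w‖) ?_ ?_
  · simpa using key
  · intro s _
    have h1 : HasDerivAt (fun s : ℝ => w + (s : ℂ) * (z - w)) (z - w) s := by
      simpa using (Complex.ofRealCLM.hasDerivAt.mul_const (z - w)).const_add w
    simpa [mul_comm] using h1.cexp.hasDerivWithinAt
  · intro s hs
    have hre : (w + (s : ℂ) * (z - w)).re ≤ 0 := by
      simp only [add_re, mul_re, ofReal_re, ofReal_im, sub_re, sub_im, zero_mul, sub_zero]
      nlinarith [hs.1, hs.2.le]
    calc ‖Complex.exp (w + (s : ℂ) * (z - w)) * (z - w)‖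
        = Real.exp ((w + (s : ℂ) * (z - w)).re) * ‖z - w‖ := by
          simp [Complex.norm_exp]
      _ ≤ ‖z - w‖ :=
          mul_le_of_le_one_left (norm_nonneg _) (Real.exp_le_one_iff.2 hre)

/-- Pointwise estimate for the three-dimensional biharmonic Green's function:
for `k` in the open first quadrant and `t ≥ 0`,
`|e^{−√(−k) t} − e^{−√k t}| ≤ √2 √|k| t`, with principal square roots. -/
theorem green_bound_3d (k : ℂ) (hre : 0 < k.re) (him : 0 < k.im) (t : ℝ) (ht : 0 ≤ t) :
    ‖Complex.exp (-((-k) ^ (1 / 2 : ℂ)) * t)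
        - Complex.exp (-(k ^ (1 / 2 : ℂ)) * t)‖
      ≤ Real.sqrt 2 * Real.sqrt ‖k‖ * t := by
  have hk : k ≠ 0 := by
    intro h; rw [h] at hre; simp at hre
  set b := k ^ (1 / 2 : ℂ) with hb
  have hlog : Complex.log (-k) = Complex.log k - Real.pi * I := by
    apply Complex.ext
    · simp [Complex.log_re]
    · simp [Complex.log_im, Complex.arg_neg_eq_arg_sub_pi_of_im_pos him]
  have hnegk : (-k) ^ (1 / 2 : ℂ) = b * (-I) := by
    rw [Complex.cpow_def_of_ne_zero (neg_ne_zero.2 hk), hlog, hb,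
      Complex.cpow_def_of_ne_zero hk, sub_mul, Complex.exp_sub]
    have hI : Complex.exp ((Real.pi : ℂ) * I * (1 / 2)) = I := by
      rw [show (Real.pi : ℂ) * I * (1 / 2) = Real.pi / 2 * I by ring, ← Complex.log_I,
        Complex.exp_log I_ne_zero]
    rw [hI, div_eq_mul_inv, Complex.inv_I]
  have harg0 : 0 ≤ Complex.arg k := Complex.arg_nonneg_iff.2 him.le
  have hargpi : Complex.arg k ≤ Real.pi := Complex.arg_le_pi k
  have hbval : b = Complex.exp (Complex.log k * (1 / 2)) := Complex.cpow_def_of_ne_zero hk _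
  have hbim2 : (Complex.log k * (1 / 2)).im = Complex.arg k / 2 := by
    simp [Complex.log_im, Complex.mul_im]
    ring
  have hbre : 0 ≤ b.re := by
    rw [hbval, Complex.exp_re, hbim2]
    exact mul_nonneg (Real.exp_pos _).le
      (Real.cos_nonneg_of_mem_Icc ⟨by linarith [Real.pi_pos], by linarith⟩)
  have hbim : 0 ≤ b.im := by
    rw [hbval, Complex.exp_im, hbim2]
    exact mul_nonneg (Real.exp_pos _).le
      (Real.sin_nonneg_of_nonneg_of_le_pi (by linarith) (by linarith))
  have habsb : ‖b‖ = Real.sqrt ‖k‖ := by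
    rw [hb, show (1 / 2 : ℂ) = ((1 / 2 : ℝ) : ℂ) by norm_num, Complex.norm_cpow_real,
      Real.sqrt_eq_rpow]
  rw [hnegk]
  have hz : (-(b * -I) * (t : ℂ)).re ≤ 0 := by
    have h : (-(b * -I) * (t : ℂ)).re = -(b.im * t) := by
      simp [Complex.mul_re, Complex.mul_im]
    rw [h]
    exact neg_nonpos.2 (mul_nonneg hbim ht)
  have hw : (-b * (t : ℂ)).re ≤ 0 := by
    have h : (-b * (t : ℂ)).re = -(b.re * t) := by
      simp [Complex.mul_re]
    rw [h]
    exact neg_nonpos.2 (mul_nonneg hbre ht)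
  refine (aux_exp_sub_exp _ _ hz hw).trans ?_
  have hdiff : -(b * -I) * (t : ℂ) - -b * (t : ℂ) = b * (1 + I) * t := by ring
  rw [hdiff, norm_mul, norm_mul, habsb, Complex.norm_real, Real.norm_eq_abs, _root_.abs_of_nonneg ht]
  have h1I : ‖1 + I‖ = Real.sqrt 2 := by
    rw [Complex.norm_def]
    norm_num [Complex.normSq_apply]
  rw [h1I]
  ring_nf
  exact le_refl _
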